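/- If S is an aperiodic measure-preserving automorphism of a standard probability space (X, μ), then for every ε > 0 and every natural number N ≥ 1 there exists a measurable set B ⊆ X such that the sets B, S(B), ..., S^{N-1}(B) are pairwise disjoint and μ(B ∪ S(B) ∪ ... ∪ S^{N-1}(B)) > 1 - ε. -/

import Mathlib

open MeasureTheory Set

/-- A measure-preserving automorphism of `(X, μ)`. -/
structure Aut (X : Type*) [MeasurableSpace X] (μ : Measure X) where
  toEquiv : X ≃ᵐ X
  mp : MeasurePreserving toEquiv μ μ

namespace Aut

variable {X : Type*} [MeasurableSpace X] {μ : Measure X}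

/-- The identity automorphism. -/
def id (μ : Measure X) : Aut X μ := ⟨MeasurableEquiv.refl X, MeasurePreserving.id μ⟩

/-- Composition of automorphisms: `(a.comp b) x = a (b x)`. -/
def comp (a b : Aut X μ) : Aut X μ :=
  ⟨b.toEquiv.trans a.toEquiv, a.mp.comp b.mp⟩

/-- Inverse automorphism. -/
def inv (a : Aut X μ) : Aut X μ := ⟨a.toEquiv.symm, a.mp.symm a.toEquiv⟩

end Aut

/-- The Halmos (pseudo)metric on `Aut X μ` associated with a fixed family `A`
of measurable sets (dense in the measure algebra):
`ρ(S,T) = Σ_i 2^{-i} (μ(S A_i Δ T A_i) + μ(S⁻¹ A_i Δ T⁻¹ A_i))`. -/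
noncomputable def halmos {X : Type*} [MeasurableSpace X] {μ : Measure X}
    (A : ℕ → Set X) (S T : Aut X μ) : ℝ :=
  ∑' i : ℕ, (1 / 2 : ℝ) ^ i *
    ((μ (symmDiff (S.toEquiv '' A i) (T.toEquiv '' A i))).toReal +
     (μ (symmDiff (S.toEquiv.symm '' A i) (T.toEquiv.symm '' A i))).toReal)

/-- A skew product over `S`: an automorphism `R` of the product space together with
a measurable family of fiber automorphisms `T x` such that `R(x,y) = (Sx, T_x y)`. -/
structure SkewExt {X : Type*} [MeasurableSpace X] {μ : Measure X} (S : Aut X μ) where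
  T : X → Aut X μ
  prod : Aut (X × X) (μ.prod μ)
  spec : ∀ p : X × X, prod.toEquiv p = (S.toEquiv p.1, (T p.1).toEquiv p.2)

/-- `R ∈ Ext(S)`: `R` is a skew product over `S` for some measurable family of fibers. -/
def IsSkewProduct {X : Type*} [MeasurableSpace X] {μ : Measure X}
    (S : Aut X μ) (R : Aut (X × X) (μ.prod μ)) : Prop :=
  ∃ T : X → Aut X μ, ∀ p : X × X, R.toEquiv p = (S.toEquiv p.1, (T p.1).toEquiv p.2)

/-- The `n`-step cocycle `C(x,n,R) = T_{S^{n-1}x} ∘ ⋯ ∘ T_{Sx} ∘ T_x`. -/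
noncomputable def cocycle {X : Type*} [MeasurableSpace X] {μ : Measure X}
    (S : Aut X μ) (T : X → Aut X μ) (x : X) : ℕ → Aut X μ
  | 0 => Aut.id μ
  | n + 1 => (T (S.toEquiv^[n] x)).comp (cocycle S T x n)

/-- Openness of a set with respect to a (pseudo)metric `d`. -/
def IsOpenWrt {Z : Type*} (d : Z → Z → ℝ) (U : Set Z) : Prop :=
  ∀ z ∈ U, ∃ ε > (0 : ℝ), ∀ w, d z w < ε → w ∈ U

/-- `D` is a `G_δ` set with respect to the (pseudo)metric `d`. -/
def IsGdeltaWrt {Z : Type*} (d : Z → Z → ℝ) (D : Set Z) : Prop :=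
  ∃ U : ℕ → Set Z, (∀ k, IsOpenWrt d (U k)) ∧ D = ⋂ k, U k

/-- `D` is dense with respect to the (pseudo)metric `d`. -/
def IsDenseWrt {Z : Type*} (d : Z → Z → ℝ) (D : Set Z) : Prop :=
  ∀ z : Z, ∀ ε > (0 : ℝ), ∃ w ∈ D, d z w < ε

/-- `S` is aperiodic: for every `n ≥ 1` the set of `n`-periodic points is null. -/
def Aperiodic {X : Type*} [MeasurableSpace X] {μ : Measure X} (S : Aut X μ) : Prop :=
  ∀ n : ℕ, 1 ≤ n → μ {x : X | S.toEquiv^[n] x = x} = 0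

/-- The trivial extension `S × Id`. -/
def prodId {X : Type*} [MeasurableSpace X] {μ : Measure X} [SFinite μ] (S : Aut X μ) :
    Aut (X × X) (μ.prod μ) :=
  ⟨S.toEquiv.prodCongr (MeasurableEquiv.refl X), S.mp.prod (MeasurePreserving.id μ)⟩

/-- Membership in `𝒥`: automorphisms of the product leaving every `A × X` invariant. -/
def MemJ {X : Type*} [MeasurableSpace X] {μ : Measure X}
    (J : Aut (X × X) (μ.prod μ)) : Prop :=
  ∀ A : Set X, MeasurableSet A → J.toEquiv '' (A ×ˢ (univ : Set X)) = A ×ˢ (univ : Set X)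


namespace RokhlinAux

variable {X : Type*} [MeasurableSpace X]

lemma inv_iter_iter (e : X ≃ᵐ X) (a : ℕ) (x : X) :
    (⇑e.symm)^[a] ((⇑e)^[a] x) = x :=
  (Function.LeftInverse.iterate (fun y => e.symm_apply_apply y) a) x

lemma iter_inv_iter (e : X ≃ᵐ X) (a : ℕ) (x : X) :
    (⇑e)^[a] ((⇑e.symm)^[a] x) = x :=
  (Function.LeftInverse.iterate (fun y => e.apply_symm_apply y) a) x

lemma inv_iter_add (e : X ≃ᵐ X) (a b : ℕ) (x : X) :
    (⇑e.symm)^[a + b] ((⇑e)^[b] x) = (⇑e.symm)^[a] x := by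
  rw [Function.iterate_add_apply, inv_iter_iter]

lemma inv_iter_le (e : X ≃ᵐ X) (a b : ℕ) (x : X) :
    (⇑e.symm)^[a] ((⇑e)^[a + b] x) = (⇑e)^[b] x := by
  rw [Function.iterate_add_apply, inv_iter_iter]

lemma iter_inv_add (e : X ≃ᵐ X) (a b : ℕ) (x : X) :
    (⇑e)^[a + b] ((⇑e.symm)^[b] x) = (⇑e)^[a] x := by
  rw [Function.iterate_add_apply, iter_inv_iter]

lemma iter_inv_le (e : X ≃ᵐ X) (a b : ℕ) (x : X) :
    (⇑e)^[a] ((⇑e.symm)^[a + b] x) = (⇑e.symm)^[b] x := by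
  rw [Function.iterate_add_apply e.symm, iter_inv_iter]

lemma image_iter (e : X ≃ᵐ X) (i : ℕ) (E : Set X) :
    (⇑e)^[i] '' E = (⇑e.symm)^[i] ⁻¹' E := by
  ext x
  constructor
  · rintro ⟨y, hy, rfl⟩; simpa [inv_iter_iter] using hy
  · intro hx; exact ⟨(⇑e.symm)^[i] x, hx, iter_inv_iter e i x⟩

lemma meas_image_iter (e : X ≃ᵐ X) (i : ℕ) {E : Set X} (hE : MeasurableSet E) :
    MeasurableSet ((⇑e)^[i] '' E) := by
  rw [image_iter]
  exact (e.symm.measurable.iterate i) hE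

lemma measure_image_iter {μ : Measure X} (e : X ≃ᵐ X) (hmp : MeasurePreserving e μ μ)
    (i : ℕ) {E : Set X} (hE : NullMeasurableSet E μ) :
    μ ((⇑e)^[i] '' E) = μ E := by
  rw [image_iter]
  exact ((hmp.symm e).iterate i).measure_preimage hE

lemma preimage_null {μ : Measure X} {f : X → X} (h : MeasurePreserving f μ μ)
    {Z : Set X} (hZ : μ Z = 0) : μ (f ⁻¹' Z) = 0 := by
  obtain ⟨Z', hsub, hm, hZ'⟩ := exists_measurable_superset_of_null hZ
  refine le_antisymm ?_ zero_le
  calc μ (f ⁻¹' Z) ≤ μ (f ⁻¹' Z') := measure_mono (preimage_mono hsub)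
    _ = μ Z' := h.measure_preimage hm.nullMeasurableSet
    _ = 0 := hZ'


/-- Lemma A : inside any positive measure set there is a positive measure subset
disjoint from its first `n-1` iterates. -/
lemma exists_posmeasure_disjoint_iterates [StandardBorelSpace X]
    {μ : Measure X} [IsProbabilityMeasure μ] (e : X ≃ᵐ X)
    (hmp : MeasurePreserving e μ μ)
    (hap : ∀ n : ℕ, 1 ≤ n → μ {x : X | (⇑e)^[n] x = x} = 0)
    (n : ℕ) {C : Set X} (hC : MeasurableSet C) (hCpos : 0 < μ C) :
    ∃ E : Set X, MeasurableSet E ∧ E ⊆ C ∧ 0 < μ E ∧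
      ∀ i, 1 ≤ i → i < n → E ∩ ((⇑e)^[i] '' E) = ∅ := by
  rcases le_or_gt n 1 with hn | hn
  · exact ⟨C, hC, subset_rfl, hCpos, fun i h1 h2 => absurd (h1.trans_lt h2) (by omega)⟩
  -- n ≥ 2
  set σ : X → X := ⇑e with hσ
  obtain ⟨f, hf⟩ := exists_measurableEmbedding_real X
  set Bad : Set X := ⋃ (i : Fin n) (k : Fin n),
    (σ^[(i : ℕ)]) ⁻¹' {x : X | σ^[(k : ℕ) + 1] x = x} with hBad
  have hBadnull : μ Bad = 0 := by
    refine measure_iUnion_null fun i => measure_iUnion_null fun k => ?_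
    exact preimage_null (hmp.iterate _) (hap _ (by omega))
  obtain ⟨Bad', hBsub, hBmeas, hBnull⟩ := exists_measurable_superset_of_null hBadnull
  -- distinctness of iterates outside Bad'
  have hdist : ∀ x ∈ C \ Bad', ∀ i j : ℕ, i < n → j < n → i ≠ j →
      σ^[i] x ≠ σ^[j] x := by
    rintro x ⟨-, hx⟩ i j hi hj hij heq
    wlog hlt : i < j generalizing i j
    · exact this j i hj hi (Ne.symm hij) heq.symm (by omega)
    apply hx
    apply hBsub
    have hk : (j - i - 1) + 1 + i = j := by omega
    refine mem_iUnion.2 ⟨⟨i, hi⟩, mem_iUnion.2 ⟨⟨j - i - 1, by omega⟩, ?_⟩⟩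
    show σ^[(j - i - 1) + 1] (σ^[i] x) = σ^[i] x
    rw [← Function.iterate_add_apply, hk, ← heq]
  -- countable family of tuples of pairwise disjoint rational intervals
  set I : ℚ × ℚ → Set ℝ := fun p => Ioo (p.1 : ℝ) (p.2 : ℝ) with hI
  set ι := {v : Fin n → ℚ × ℚ // ∀ i j : Fin n, i ≠ j → Disjoint (I (v i)) (I (v j))} with hι
  set W : ι → Set X := fun v => ⋂ i : Fin n, {x : X | f (σ^[(i : ℕ)] x) ∈ I (v.1 i)} with hW
  have hWmeas : ∀ v : ι, MeasurableSet (W v) := by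
    intro v
    refine MeasurableSet.iInter fun i => ?_
    exact (hf.measurable.comp (e.measurable.iterate _)) measurableSet_Ioo
  -- covering
  have hcov : ∀ x ∈ C \ Bad', ∃ v : ι, x ∈ W v := by
    intro x hx
    set r : Fin n → ℝ := fun i => f (σ^[(i : ℕ)] x) with hr
    have hrne : ∀ i j : Fin n, i ≠ j → r i ≠ r j := by
      intro i j hij h
      exact hdist x hx i j i.isLt j.isLt (fun h' => hij (Fin.ext h')) (hf.injective h)
    set T : Finset (Fin n × Fin n) := Finset.univ.filter fun p => p.1 ≠ p.2 with hT
    have hTne : T.Nonempty := by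
      exact ⟨(⟨0, by omega⟩, ⟨1, by omega⟩), by simp [hT, Fin.ext_iff]⟩
    set m : ℝ := T.inf' hTne fun p => |r p.1 - r p.2| with hm
    have hmpos : 0 < m := by
      rw [hm, Finset.lt_inf'_iff]
      rintro ⟨i, j⟩ hij
      have : i ≠ j := (Finset.mem_filter.1 hij).2
      exact abs_pos.2 (sub_ne_zero.2 (hrne i j this))
    have hmle : ∀ i j : Fin n, i ≠ j → m ≤ |r i - r j| := by
      intro i j hij
      have hmem : ((i, j) : Fin n × Fin n) ∈ T :=
        Finset.mem_filter.2 ⟨Finset.mem_univ _, hij⟩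
      rw [hm]
      exact Finset.inf'_le _ hmem
    have hab : ∀ i : Fin n, ∃ p : ℚ × ℚ,
        (r i - m/3 < (p.1 : ℝ) ∧ (p.1 : ℝ) < r i) ∧
        (r i < (p.2 : ℝ) ∧ (p.2 : ℝ) < r i + m/3) := by
      intro i
      obtain ⟨a, ha⟩ := exists_rat_btwn (show r i - m/3 < r i by linarith)
      obtain ⟨b, hb⟩ := exists_rat_btwn (show r i < r i + m/3 by linarith)
      exact ⟨(a, b), ha, hb⟩
    choose v hv using hab
    have hvd : ∀ i j : Fin n, i ≠ j → Disjoint (I (v i)) (I (v j)) := by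
      intro i j hij
      rw [Set.disjoint_left]
      rintro y hyi hyj
      simp only [hI, mem_Ioo] at hyi hyj
      have h1 := (hv i).1.1; have h2 := (hv i).2.2
      have h3 := (hv j).1.1; have h4 := (hv j).2.2
      have := hmle i j hij
      rcases le_abs.mp this with h | h <;> linarith [hyi.1, hyi.2, hyj.1, hyj.2]
    refine ⟨⟨v, hvd⟩, ?_⟩
    refine mem_iInter.2 fun i => ?_
    show f (σ^[(i : ℕ)] x) ∈ I (v i)
    exact ⟨(hv i).1.2, (hv i).2.1⟩
  -- choose one chart with positive measure
  have hCBmeas : MeasurableSet (C \ Bad') := hC.diff hBmeas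
  have hCBpos : 0 < μ (C \ Bad') := by
    rwa [measure_diff_null hBnull]
  have : ∃ v : ι, 0 < μ ((C \ Bad') ∩ W v) := by
    by_contra h
    push_neg at h
    simp only [le_zero_iff] at h
    have hsub : C \ Bad' ⊆ ⋃ v : ι, ((C \ Bad') ∩ W v) := by
      intro x hx
      obtain ⟨v, hv⟩ := hcov x hx
      exact mem_iUnion.2 ⟨v, hx, hv⟩
    have : μ (C \ Bad') = 0 :=
      le_antisymm (le_trans (measure_mono hsub) (le_of_eq (measure_iUnion_null h))) zero_le
    exact hCBpos.ne' this
  obtain ⟨v, hvpos⟩ := this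
  refine ⟨(C \ Bad') ∩ W v, hCBmeas.inter (hWmeas v), (inter_subset_left).trans diff_subset,
    hvpos, ?_⟩
  intro i h1 h2
  rw [eq_empty_iff_forall_notMem]
  rintro x ⟨hx1, y, hy1, rfl⟩
  have hx0 : f (σ^[i] y) ∈ I (v.1 ⟨0, by omega⟩) := by
    have := mem_iInter.1 hx1.2 ⟨0, by omega⟩
    simpa using this
  have hxi : f (σ^[i] y) ∈ I (v.1 ⟨i, h2⟩) := by
    have := mem_iInter.1 hy1.2 ⟨i, h2⟩
    simpa using this
  have hne : (⟨0, by omega⟩ : Fin n) ≠ ⟨i, h2⟩ := by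
    intro h
    have := Fin.mk.injEq .. ▸ h
    rw [Fin.mk.injEq] at h
    omega
  exact (Set.disjoint_left.1 (v.2 _ _ hne)) hx0 hxi


/-- Lemma B: a maximal `n`-disjoint set whose `±(n-1)` window is co-null. -/
lemma exists_maximal_disjoint [StandardBorelSpace X]
    {μ : Measure X} [IsProbabilityMeasure μ] (e : X ≃ᵐ X)
    (hmp : MeasurePreserving e μ μ)
    (hap : ∀ n : ℕ, 1 ≤ n → μ {x : X | (⇑e)^[n] x = x} = 0)
    (n : ℕ) (hn : 1 ≤ n) :
    ∃ E : Set X, MeasurableSet E ∧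
      (∀ i, 1 ≤ i → i < n → E ∩ ((⇑e)^[i] '' E) = ∅) ∧
      μ ((⋃ i < n, (⇑e)^[i] '' E) ∪ (⋃ i < n, (⇑e.symm)^[i] '' E))ᶜ = 0 := by
  classical
  set σ : X → X := ⇑e with hσdef
  set τ : X → X := ⇑e.symm with hτdef
  set U : Set X → Set X :=
    fun E => (⋃ i < n, σ^[i] '' E) ∪ (⋃ i < n, τ^[i] '' E) with hU
  set nd : Set X → Prop := fun E => ∀ i, 1 ≤ i → i < n → E ∩ (σ^[i] '' E) = ∅ with hnd
  set adm : Set X → Set X → Prop :=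
    fun E F => MeasurableSet F ∧ F ⊆ (U E)ᶜ ∧ nd F with hadm
  set s : Set X → ENNReal := fun E => ⨆ (F : Set X) (_ : adm E F), μ F with hs
  have hUmono : ∀ E E' : Set X, E ⊆ E' → U E ⊆ U E' := by
    intro E E' h
    exact union_subset_union
      (iUnion₂_mono fun i _ => image_mono h)
      (iUnion₂_mono fun i _ => image_mono h)
  have hUself : ∀ E : Set X, E ⊆ U E := by
    intro E x hx
    exact mem_union_left _ (mem_iUnion₂.2 ⟨0, hn, by simpa using hx⟩)
  have hUsub1 : ∀ (E : Set X) (i : ℕ), i < n → σ^[i] '' E ⊆ U E := by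
    intro E i hi x hx
    exact mem_union_left _ (mem_iUnion₂.2 ⟨i, hi, hx⟩)
  have hUsub2 : ∀ (E : Set X) (i : ℕ), i < n → τ^[i] '' E ⊆ U E := by
    intro E i hi x hx
    exact mem_union_right _ (mem_iUnion₂.2 ⟨i, hi, hx⟩)
  have hUmeas : ∀ E : Set X, MeasurableSet E → MeasurableSet (U E) := by
    intro E hE
    exact ((MeasurableSet.biUnion (Set.to_countable _)
        fun i _ => meas_image_iter e i hE)).union
      (MeasurableSet.biUnion (Set.to_countable _) fun i _ => meas_image_iter e.symm i hE)
  have key : ∀ E : Set X, ∃ F : Set X, adm E F ∧ s E ≤ 2 * μ F := by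
    intro E
    rcases eq_or_ne (s E) 0 with h0 | h0
    · refine ⟨∅, ⟨MeasurableSet.empty, empty_subset _, fun i _ _ => by simp⟩, ?_⟩
      rw [h0]; exact zero_le
    · have hs1 : s E ≤ 1 := by
        refine iSup₂_le fun F _ => ?_
        exact prob_le_one
      have hhalf : s E / 2 < s E :=
        ENNReal.half_lt_self h0 (hs1.trans_lt ENNReal.one_lt_top).ne
      rw [hs] at hhalf
      obtain ⟨F, hF⟩ := lt_iSup_iff.mp hhalf
      obtain ⟨hFadm, hF2⟩ := lt_iSup_iff.mp hF
      refine ⟨F, hFadm, ?_⟩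
      calc s E = 2 * (s E / 2) := (ENNReal.mul_div_cancel two_ne_zero ENNReal.ofNat_ne_top).symm
        _ ≤ 2 * μ F := mul_le_mul_right hF2.le _
  -- the recursive sequence
  set next : Set X → Set X := fun E => (key E).choose with hnext
  have hnextspec : ∀ E, adm E (next E) ∧ s E ≤ 2 * μ (next E) := fun E => (key E).choose_spec
  set Eseq : ℕ → Set X := fun k => Nat.rec ∅ (fun _ Ek => Ek ∪ next Ek) k with hEseq
  have hEzero : Eseq 0 = ∅ := rfl
  have hEsucc : ∀ k, Eseq (k + 1) = Eseq k ∪ next (Eseq k) := fun k => rfl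
  have hmono : ∀ k, Eseq k ⊆ Eseq (k + 1) := fun k => by
    rw [hEsucc]; exact subset_union_left
  have hmono' : ∀ k l, k ≤ l → Eseq k ⊆ Eseq l := by
    intro k l h
    induction h with
    | refl => exact subset_rfl
    | step h' ih => exact ih.trans (hmono _)
  have hinv : ∀ k, MeasurableSet (Eseq k) ∧ nd (Eseq k) := by
    intro k
    induction k with
    | zero =>
      constructor
      · rw [hEzero]; exact MeasurableSet.empty
      · intro i _ _; rw [hEzero]; simp
    | succ k ih =>
      obtain ⟨hkm, hknd⟩ := ih
      obtain ⟨⟨hFm, hFsub, hFnd⟩, -⟩ := hnextspec (Eseq k)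
      rw [hEsucc]
      constructor
      · exact hkm.union hFm
      · intro i h1 h2
        rw [image_union, eq_empty_iff_forall_notMem]
        rintro x ⟨hx1, hx2⟩
        rcases hx1 with hxE | hxF
        · rcases hx2 with hxE' | hxF'
          · exact eq_empty_iff_forall_notMem.1 (hknd i h1 h2) x ⟨hxE, hxE'⟩
          · -- x ∈ Eseq k, x ∈ σ^[i] '' next: preimage of x is in τ^[i]''(Eseq k) ⊆ U
            obtain ⟨y, hy, rfl⟩ := hxF'
            exact hFsub hy (hUsub2 (Eseq k) i h2 ⟨σ^[i] y, hxE, inv_iter_iter e i y⟩)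
        · rcases hx2 with hxE' | hxF'
          · exact hFsub hxF (hUsub1 (Eseq k) i h2 hxE')
          · exact eq_empty_iff_forall_notMem.1 (hFnd i h1 h2) x ⟨hxF, hxF'⟩
  set Einf : Set X := ⋃ k, Eseq k with hEinf
  have hEinfm : MeasurableSet Einf := MeasurableSet.iUnion fun k => (hinv k).1
  have hEinfnd : nd Einf := by
    intro i h1 h2
    rw [eq_empty_iff_forall_notMem]
    rintro x ⟨hx1, y, hy, rfl⟩
    obtain ⟨k, hk⟩ := mem_iUnion.1 hx1
    obtain ⟨l, hl⟩ := mem_iUnion.1 hy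
    have hkx : σ^[i] y ∈ Eseq (max k l) := hmono' k _ (le_max_left _ _) hk
    have hly : y ∈ Eseq (max k l) := hmono' l _ (le_max_right _ _) hl
    exact eq_empty_iff_forall_notMem.1 ((hinv (max k l)).2 i h1 h2) (σ^[i] y)
      ⟨hkx, ⟨y, hly, rfl⟩⟩
  refine ⟨Einf, hEinfm, hEinfnd, ?_⟩
  by_contra hpos
  have hpos' : 0 < μ (U Einf)ᶜ := pos_iff_ne_zero.mpr hpos
  obtain ⟨F, hFm, hFsub, hFpos, hFnd⟩ :=
    exists_posmeasure_disjoint_iterates e hmp hap n (hUmeas Einf hEinfm).compl hpos'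
  have hFadm : ∀ k, adm (Eseq k) F := by
    intro k
    refine ⟨hFm, hFsub.trans (compl_subset_compl.2 (hUmono _ _ (subset_iUnion Eseq k))), hFnd⟩
  have hsk : ∀ k, μ F ≤ s (Eseq k) := by
    intro k
    rw [hs]
    exact le_iSup₂_of_le F (hFadm k) le_rfl
  have hgrow : ∀ k, μ (Eseq (k + 1)) = μ (Eseq k) + μ (next (Eseq k)) := by
    intro k
    rw [hEsucc]
    refine measure_union ?_ ((hnextspec (Eseq k)).1.1)
    rw [Set.disjoint_left]
    intro x hx hx'
    exact ((hnextspec (Eseq k)).1.2.1 hx') (hUself (Eseq k) hx)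
  have hlow : ∀ k : ℕ, (k : ENNReal) * μ F ≤ 2 * μ (Eseq k) := by
    intro k
    induction k with
    | zero => simp
    | succ k ih =>
      have h1 : μ F ≤ 2 * μ (next (Eseq k)) := (hsk k).trans (hnextspec (Eseq k)).2
      calc ((k + 1 : ℕ) : ENNReal) * μ F = (k : ENNReal) * μ F + μ F := by
            push_cast; ring
        _ ≤ 2 * μ (Eseq k) + 2 * μ (next (Eseq k)) := add_le_add ih h1
        _ = 2 * μ (Eseq (k + 1)) := by rw [hgrow k, mul_add]
  have hFne : μ F ≠ 0 := hFpos.ne'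
  have hFnt : μ F ≠ ⊤ := (measure_ne_top μ F)
  obtain ⟨k, hk⟩ := ENNReal.exists_nat_gt (show (2 : ENNReal) / μ F ≠ ⊤ from
    (ENNReal.div_lt_top ENNReal.ofNat_ne_top hFne).ne)
  have h2k : (2 : ENNReal) < k * μ F :=
    (ENNReal.div_lt_iff (Or.inl hFne) (Or.inl hFnt)).1 hk
  have : (k : ENNReal) * μ F ≤ 2 := by
    refine (hlow k).trans ?_
    calc 2 * μ (Eseq k) ≤ 2 * 1 := mul_le_mul_right prob_le_one _
      _ = 2 := mul_one _
  exact absurd (h2k.trans_le this) (lt_irrefl _)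

end RokhlinAux

/-- Rokhlin–Halmos lemma: for an aperiodic automorphism `S`, `ε > 0` and `N ≥ 1`
there is a measurable `B` with `B, SB, …, S^{N-1}B` pairwise disjoint and
`μ(B ∪ SB ∪ ⋯ ∪ S^{N-1}B) > 1 - ε`. -/
theorem rokhlin_halmos {X : Type*} [MeasurableSpace X] [StandardBorelSpace X]
    (μ : Measure X) [IsProbabilityMeasure μ] (S : Aut X μ)
    (hS : Aperiodic S) (ε : ℝ) (hε : 0 < ε) (N : ℕ) (hN : 1 ≤ N) :
    ∃ B : Set X, MeasurableSet B ∧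
      (∀ i j, i < N → j < N → i ≠ j →
        Disjoint (S.toEquiv^[i] '' B) (S.toEquiv^[j] '' B)) ∧
      1 - ENNReal.ofReal ε < μ (⋃ i < N, S.toEquiv^[i] '' B) := by  classical
  set σ : X → X := ⇑S.toEquiv with hσdef
  set τ : X → X := ⇑S.toEquiv.symm with hτdef
  have hmp : MeasurePreserving σ μ μ := S.mp
  have hap : ∀ m : ℕ, 1 ≤ m → μ {x : X | σ^[m] x = x} = 0 := hS
  set c : ℕ := Nat.ceil (1 / ε) with hcdef
  set n : ℕ := N * (c + 1) with hndef
  have hc1 : 1 ≤ c := Nat.one_le_ceil_iff.2 (by positivity)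
  have hn1 : 1 ≤ n := by
    have : 1 * 1 ≤ N * (c + 1) := Nat.mul_le_mul hN (by omega)
    simpa [hndef] using this
  have hNn : N - 1 < n := by
    have h2 : N * 2 ≤ N * (c + 1) := Nat.mul_le_mul_left N (by omega)
    have := hndef
    omega
  obtain ⟨E, hEmeas, hEnd, hEnull⟩ :=
    RokhlinAux.exists_maximal_disjoint S.toEquiv hmp hap n hn1
  set U : Set X := (⋃ i < n, σ^[i] '' E) ∪ (⋃ i < n, τ^[i] '' E) with hUdef
  have hUmeas : MeasurableSet U :=
    ((MeasurableSet.biUnion (Set.to_countable _)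
        fun i _ => RokhlinAux.meas_image_iter S.toEquiv i hEmeas)).union
      (MeasurableSet.biUnion (Set.to_countable _)
        fun i _ => RokhlinAux.meas_image_iter S.toEquiv.symm i hEmeas)
  -- the tower levels
  set C : ℕ → Set X :=
    fun t => ((τ^[t]) ⁻¹' E) ∩ (⋂ (j : ℕ) (_ : j < t), (τ^[j]) ⁻¹' Eᶜ) with hCdef
  set F : Set X := ⋂ (s₀ : ℕ) (_ : 1 ≤ s₀ ∧ s₀ < N), (σ^[s₀]) ⁻¹' Eᶜ with hFdef
  set B : Set X := ⋃ k : ℕ, C (k * N) ∩ F with hBdef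
  have hmemC : ∀ t z, z ∈ C t ↔ (τ^[t] z ∈ E ∧ ∀ j < t, τ^[j] z ∉ E) := by
    intro t z
    simp [hCdef, mem_iInter]
  have hmemF : ∀ z, z ∈ F ↔ ∀ s₀, 1 ≤ s₀ → s₀ < N → σ^[s₀] z ∉ E := by
    intro z
    simp only [hFdef, mem_iInter, mem_preimage, mem_compl_iff]
    exact ⟨fun h a h1 h2 => h a ⟨h1, h2⟩, fun h a ⟨h1, h2⟩ => h a h1 h2⟩
  have hCmeas : ∀ t, MeasurableSet (C t) := by
    intro t
    refine (((S.toEquiv.symm.measurable.iterate t) hEmeas)).inter ?_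
    exact MeasurableSet.biInter (Set.to_countable _)
      fun j _ => (S.toEquiv.symm.measurable.iterate j) hEmeas.compl
  have hFmeas : MeasurableSet F :=
    MeasurableSet.biInter (Set.to_countable _)
      fun s₀ _ => (S.toEquiv.measurable.iterate s₀) hEmeas.compl
  have hBmeas : MeasurableSet B :=
    MeasurableSet.iUnion fun k => (hCmeas _).inter hFmeas
  -- claim 2 : the levels C t are pairwise disjoint
  have claim2 : ∀ t t' : ℕ, t ≠ t' → Disjoint (C t) (C t') := by
    have key : ∀ t t' : ℕ, t < t' → Disjoint (C t) (C t') := by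
      intro t t' h
      rw [Set.disjoint_left]
      intro z hz hz'
      exact ((hmemC t' z).1 hz').2 t h ((hmemC t z).1 hz).1
    intro t t' h
    rcases Nat.lt_or_ge t t' with h' | h'
    · exact key t t' h'
    · exact (key t' t (by omega)).symm
  -- claim 1 : σ^[i] maps C t ∩ F into C (t+i) for i < N
  have claim1 : ∀ i, i < N → ∀ t, σ^[i] '' (C t ∩ F) ⊆ C (t + i) := by
    intro i hi t
    rintro z ⟨y, ⟨hyC, hyF⟩, rfl⟩
    obtain ⟨hyt, hylt⟩ := (hmemC t y).1 hyC
    refine (hmemC (t + i) _).2 ⟨?_, ?_⟩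
    · rw [RokhlinAux.inv_iter_add S.toEquiv t i y]
      exact hyt
    · intro j hj
      rcases Nat.lt_or_ge j i with hji | hji
      · have hrw : i = j + (i - j) := by omega
        rw [hrw, RokhlinAux.inv_iter_le S.toEquiv j (i - j) y]
        exact (hmemF y).1 hyF (i - j) (by omega) (by omega)
      · have hrw : j = (j - i) + i := by omega
        rw [hrw, RokhlinAux.inv_iter_add S.toEquiv (j - i) i y]
        exact hylt (j - i) (by omega)
  -- claim 3 : coverage
  have claim3 : ∀ t z, z ∈ C t →
      (∀ s₀, 1 ≤ s₀ → s₀ + t % N < N → σ^[s₀] z ∉ E) →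
      z ∈ σ^[t % N] '' B := by
    intro t z hzC hcond
    obtain ⟨hzt, hzlt⟩ := (hmemC t z).1 hzC
    set i : ℕ := t % N with hidef
    have hit : i ≤ t := Nat.mod_le t N
    set y : X := τ^[i] z with hydef
    have hy1 : y ∈ C (t - i) := by
      refine (hmemC (t - i) y).2 ⟨?_, ?_⟩
      · have : τ^[t - i] y = τ^[t] z := by
          rw [hydef, ← Function.iterate_add_apply τ (t - i) i z]
          congr 1
          omega
        rw [this]; exact hzt
      · intro j hj
        have : τ^[j] y = τ^[j + i] z := by
          rw [hydef, ← Function.iterate_add_apply τ j i z]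
        rw [this]
        exact hzlt (j + i) (by omega)
    have hy2 : y ∈ F := by
      refine (hmemF y).2 fun s₀ h1 h2 => ?_
      rcases Nat.lt_or_ge i s₀ with his | his
      · have hrw : σ^[s₀] y = σ^[s₀ - i] z := by
          have h := RokhlinAux.iter_inv_add S.toEquiv (s₀ - i) i z
          rw [show s₀ - i + i = s₀ by omega] at h
          rw [hydef]; exact h
        rw [hrw]
        exact hcond (s₀ - i) (by omega) (by omega)
      · have hi1 : 1 ≤ i := by omega
        have hrw : σ^[s₀] y = τ^[i - s₀] z := by
          have h := RokhlinAux.iter_inv_le S.toEquiv s₀ (i - s₀) z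
          rw [show s₀ + (i - s₀) = i by omega] at h
          rw [hydef]; exact h
        rw [hrw]
        exact hzlt (i - s₀) (by omega)
    have hyB : y ∈ B := by
      have hdiv := Nat.mod_add_div t N
      have hk : t - i = (t / N) * N := by rw [Nat.mul_comm (t / N) N]; omega
      exact mem_iUnion.2 ⟨t / N, by rw [← hk]; exact ⟨hy1, hy2⟩⟩
    exact ⟨y, hyB, RokhlinAux.iter_inv_iter S.toEquiv i z⟩
  -- the union of the tower
  set V : Set X := ⋃ i < N, σ^[i] '' B with hVdef
  have hVmeas : MeasurableSet V :=
    MeasurableSet.biUnion (Set.to_countable _)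
      fun i _ => RokhlinAux.meas_image_iter S.toEquiv i hBmeas
  set W : Set X := ⋃ t : ℕ, C t with hWdef
  have hWmem : ∀ z, (∃ t, τ^[t] z ∈ E) → z ∈ W := by
    intro z hz
    refine mem_iUnion.2 ⟨Nat.find hz, (hmemC _ z).2 ⟨Nat.find_spec hz, ?_⟩⟩
    exact fun j hj => Nat.find_min hz hj
  -- W has full measure
  have hWsub : σ^[n - 1] '' U ⊆ W := by
    rintro z ⟨u, hu, rfl⟩
    rcases hu with hu | hu
    · obtain ⟨i, hi, w, hw, rfl⟩ := by
        simpa only [mem_iUnion] using hu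
      refine hWmem _ ⟨(n - 1) + i, ?_⟩
      rw [← Function.iterate_add_apply σ (n - 1) i w,
        RokhlinAux.inv_iter_iter S.toEquiv ((n - 1) + i) w]
      exact hw
    · obtain ⟨i, hi, w, hw, rfl⟩ := by
        simpa only [mem_iUnion] using hu
      refine hWmem _ ⟨n - 1 - i, ?_⟩
      have hrw : σ^[n - 1] (τ^[i] w) = σ^[n - 1 - i] w := by
        have h := RokhlinAux.iter_inv_add S.toEquiv (n - 1 - i) i w
        rw [show n - 1 - i + i = n - 1 by omega] at h
        exact h
      rw [hrw, RokhlinAux.inv_iter_iter S.toEquiv (n - 1 - i) w]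
      exact hw
  have hWnull : μ Wᶜ = 0 := by
    have h1 : Wᶜ ⊆ σ^[n - 1] '' Uᶜ := by
      rw [image_compl_eq ((S.toEquiv.bijective).iterate (n - 1))]
      exact compl_subset_compl.2 hWsub
    have h2 : μ (σ^[n - 1] '' Uᶜ) = μ Uᶜ :=
      RokhlinAux.measure_image_iter S.toEquiv hmp (n - 1) hUmeas.compl.nullMeasurableSet
    refine le_antisymm ?_ zero_le
    calc μ Wᶜ ≤ μ (σ^[n - 1] '' Uᶜ) := measure_mono h1
      _ = μ Uᶜ := h2
      _ = 0 := hEnull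
  -- the complement of V
  have hVc : Vᶜ ⊆ Wᶜ ∪ ⋃ s₀ ∈ Finset.Ico 1 N, (σ^[s₀]) ⁻¹' E := by
    intro z hz
    by_cases hzW : z ∈ W
    · obtain ⟨t, hzt⟩ := mem_iUnion.1 hzW
      by_cases hcond : ∀ s₀, 1 ≤ s₀ → s₀ + t % N < N → σ^[s₀] z ∉ E
      · exfalso
        refine hz (mem_iUnion₂.2 ⟨t % N, Nat.mod_lt t (by omega), ?_⟩)
        exact claim3 t z hzt hcond
      · push_neg at hcond
        obtain ⟨s₀, h1, h2, h3⟩ := hcond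
        refine Or.inr (mem_iUnion₂.2 ⟨s₀, ?_, h3⟩)
        exact Finset.mem_Ico.2 ⟨h1, by omega⟩
    · exact Or.inl hzW
  have hVcbound : μ Vᶜ ≤ ((N - 1 : ℕ) : ENNReal) * μ E := by
    calc μ Vᶜ ≤ μ Wᶜ + μ (⋃ s₀ ∈ Finset.Ico 1 N, (σ^[s₀]) ⁻¹' E) :=
          (measure_mono hVc).trans (measure_union_le _ _)
      _ = μ (⋃ s₀ ∈ Finset.Ico 1 N, (σ^[s₀]) ⁻¹' E) := by rw [hWnull, zero_add]
      _ ≤ ∑ s₀ ∈ Finset.Ico 1 N, μ ((σ^[s₀]) ⁻¹' E) := measure_biUnion_finset_le _ _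
      _ = ∑ s₀ ∈ Finset.Ico 1 N, μ E := by
          refine Finset.sum_congr rfl fun s₀ _ => ?_
          exact (hmp.iterate s₀).measure_preimage hEmeas.nullMeasurableSet
      _ = ((N - 1 : ℕ) : ENNReal) * μ E := by
          rw [Finset.sum_const, Nat.card_Ico, nsmul_eq_mul]
  -- n * μ E ≤ 1
  have hdisjE : ∀ i j : ℕ, i < j → j < n → Disjoint (σ^[i] '' E) (σ^[j] '' E) := by
    intro i j hij hj
    rw [Set.disjoint_left]
    rintro x ⟨a, ha, hax⟩ ⟨b, hb, hbx⟩
    have hab : a = σ^[j - i] b := by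
      have h1 : σ^[j] b = σ^[i] (σ^[j - i] b) := by
        rw [← Function.iterate_add_apply σ i (j - i) b]
        congr 1
        omega
      have h2 : σ^[i] a = σ^[i] (σ^[j - i] b) := by rw [hax, ← hbx, h1]
      have hinj : Function.Injective (σ^[i]) := (S.toEquiv.injective).iterate i
      exact hinj h2
    have : a ∈ E ∩ (σ^[j - i] '' E) := ⟨ha, ⟨b, hb, hab.symm⟩⟩
    rw [hEnd (j - i) (by omega) (by omega)] at this
    exact this
  have hnE : (n : ENNReal) * μ E ≤ 1 := by
    have hpd : (↑(Finset.range n) : Set ℕ).PairwiseDisjoint fun i => σ^[i] '' E := by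
      intro i hi j hj hij
      simp only [Finset.coe_range, mem_Iio] at hi hj
      rcases Nat.lt_or_ge i j with h | h
      · exact hdisjE i j h hj
      · exact (hdisjE j i (by omega) hi).symm
    have hsum := measure_biUnion_finset (μ := μ) hpd
      (fun i _ => RokhlinAux.meas_image_iter S.toEquiv i hEmeas)
    have heach : ∀ i ∈ Finset.range n, μ (σ^[i] '' E) = μ E := fun i _ =>
      RokhlinAux.measure_image_iter S.toEquiv hmp i hEmeas.nullMeasurableSet
    calc (n : ENNReal) * μ E = ∑ i ∈ Finset.range n, μ (σ^[i] '' E) := by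
          rw [Finset.sum_congr rfl heach, Finset.sum_const, Finset.card_range, nsmul_eq_mul]
      _ = μ (⋃ i ∈ Finset.range n, σ^[i] '' E) := hsum.symm
      _ ≤ μ univ := measure_mono (subset_univ _)
      _ = 1 := measure_univ
  have hμE : μ E ≤ (n : ENNReal)⁻¹ :=
    ENNReal.le_inv_iff_mul_le.2 (by rw [mul_comm] at hnE; exact hnE)
  -- real arithmetic
  have hnpos : (0 : ℝ) < (n : ℝ) := by exact_mod_cast Nat.pos_of_ne_zero (by omega)
  have hrlt1 : ((N - 1 : ℕ) : ℝ) / (n : ℝ) < 1 := by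
    rw [div_lt_one hnpos]
    exact_mod_cast hNn
  have hrltε : ((N - 1 : ℕ) : ℝ) / (n : ℝ) < ε := by
    rw [div_lt_iff₀ hnpos]
    have hcast : (n : ℝ) = (N : ℝ) * ((c : ℝ) + 1) := by
      rw [hndef]; push_cast; ring
    have h1ε : 1 / ε ≤ (c : ℝ) := by
      rw [hcdef]; exact Nat.le_ceil _
    have hN1 : (1 : ℝ) ≤ (N : ℝ) := by exact_mod_cast hN
    have hNlt : ((N - 1 : ℕ) : ℝ) < (N : ℝ) := by
      exact_mod_cast (by omega : N - 1 < N)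
    have hεN : (0 : ℝ) < ε * (N : ℝ) := by positivity
    have key : (N : ℝ) ≤ ε * (N : ℝ) * (c : ℝ) := by
      have h2 : ε * (N : ℝ) * (1 / ε) ≤ ε * (N : ℝ) * (c : ℝ) :=
        mul_le_mul_of_nonneg_left h1ε hεN.le
      have h3 : ε * (N : ℝ) * (1 / ε) = (N : ℝ) := by
        field_simp
      linarith
    rw [hcast]
    nlinarith
  have hδeq : ((N - 1 : ℕ) : ENNReal) * (n : ENNReal)⁻¹ =
      ENNReal.ofReal (((N - 1 : ℕ) : ℝ) / (n : ℝ)) := by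
    rw [ENNReal.ofReal_div_of_pos hnpos, ENNReal.ofReal_natCast, ENNReal.ofReal_natCast,
      div_eq_mul_inv]
  set δ : ENNReal := ENNReal.ofReal (((N - 1 : ℕ) : ℝ) / (n : ℝ)) with hδdef
  have hVcδ : μ Vᶜ ≤ δ := by
    calc μ Vᶜ ≤ ((N - 1 : ℕ) : ENNReal) * μ E := hVcbound
      _ ≤ ((N - 1 : ℕ) : ENNReal) * (n : ENNReal)⁻¹ := mul_le_mul_right hμE _
      _ = δ := hδeq
  have hδε : δ < ENNReal.ofReal ε := (ENNReal.ofReal_lt_ofReal_iff hε).2 hrltε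
  have hδ1 : δ < 1 := ENNReal.ofReal_lt_one.2 hrlt1
  have hsum : μ V + μ Vᶜ = 1 := by
    rw [measure_add_measure_compl hVmeas, measure_univ]
  have hVge : (1 : ENNReal) ≤ μ V + δ := by
    rw [← hsum]
    exact add_le_add_right hVcδ (μ V)
  have hVpos : 0 < μ V := by
    rcases eq_or_ne (μ V) 0 with h | h
    · exfalso
      rw [h, zero_add] at hVge
      exact absurd (hVge.trans_lt hδ1) (lt_irrefl _)
    · exact pos_iff_ne_zero.2 h
  refine ⟨B, hBmeas, ?_, ?_⟩
  · -- pairwise disjointness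
    intro i j hi hj hij
    have h1 : σ^[i] '' B ⊆ ⋃ k : ℕ, C (k * N + i) := by
      rw [hBdef, image_iUnion]
      refine iUnion_subset fun k => ?_
      exact (claim1 i hi (k * N)).trans (subset_iUnion (fun k => C (k * N + i)) k)
    have h2 : σ^[j] '' B ⊆ ⋃ k : ℕ, C (k * N + j) := by
      rw [hBdef, image_iUnion]
      refine iUnion_subset fun k => ?_
      exact (claim1 j hj (k * N)).trans (subset_iUnion (fun k => C (k * N + j)) k)
    refine (Disjoint.mono h1 h2) ?_
    rw [Set.disjoint_left]
    intro z hz1 hz2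
    obtain ⟨k, hk⟩ := mem_iUnion.1 hz1
    obtain ⟨l, hl⟩ := mem_iUnion.1 hz2
    have hne : k * N + i ≠ l * N + j := by
      intro h
      have h1 : (k * N + i) % N = i := by
        rw [Nat.add_comm, Nat.add_mul_mod_self_right, Nat.mod_eq_of_lt hi]
      have h2 : (l * N + j) % N = j := by
        rw [Nat.add_comm, Nat.add_mul_mod_self_right, Nat.mod_eq_of_lt hj]
      rw [h, h2] at h1
      exact hij h1.symm
    exact Set.disjoint_left.1 (claim2 _ _ hne) hk hl
  · -- measure estimate
    show 1 - ENNReal.ofReal ε < μ V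
    rcases le_or_gt (ENNReal.ofReal ε) 1 with hε1 | hε1
    · refine ENNReal.sub_lt_of_lt_add hε1 ?_
      calc (1 : ENNReal) ≤ μ V + δ := hVge
        _ < μ V + ENNReal.ofReal ε := ENNReal.add_lt_add_left (measure_ne_top μ V) hδε
    · have h0 : (1 : ENNReal) - ENNReal.ofReal ε = 0 := tsub_eq_zero_of_le hε1.le
      rw [h0]
      exact hVpos
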